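/- Let A be a weak based ring of finite rank. Then every irreducible Z₊-module over A has rank bounded by N, where N is the maximum coefficient in the expansion of b² (with b the sum of all basis elements of A), and there are only finitely many equivalence classes of irreducible Z₊-modules over A. -/

import Mathlib

open Finset

/-- A weak based ring of finite rank, presented by its structure constants on a finite basis
`{b_i}_{i ∈ I}`: `b_i b_j = ∑_l (c i j l) b_l`, `1 = ∑_i (a i) b_i`, with an involution `inv`
of `I` inducing an anti-involution, and `τ(b_i b_j) > 0` iff `j = i*`, where `τ(b_l) = 1` iff
`b_l` occurs in `1`. -/
structure WeakBasedRing (I : Type) [Fintype I] [DecidableEq I] where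
  c : I → I → I → ℕ
  a : I → ℕ
  inv : I → I
  inv_inv : ∀ i, inv (inv i) = i
  one_mul : ∀ j l, (∑ i, a i * c i j l) = if j = l then 1 else 0
  mul_one : ∀ j l, (∑ i, a i * c j i l) = if j = l then 1 else 0
  assoc : ∀ i j l m, (∑ x, c i j x * c x l m) = (∑ x, c j l x * c i x m)
  anti : ∀ i j l, c (inv j) (inv i) (inv l) = c i j l
  tau_pos : ∀ i, 0 < ∑ l, c i (inv i) l * (if a l ≠ 0 then 1 else 0)
  tau_zero : ∀ i j, j ≠ inv i → (∑ l, c i j l * (if a l ≠ 0 then 1 else 0)) = 0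

/-- A `ℤ₊`-module over a weak based ring `A`, presented by its structure constants on a finite
basis `{m_l}_{l ∈ L}`: `m_l · b_i = ∑_x (f l i x) m_x`. -/
structure ZPlusModule {I : Type} [Fintype I] [DecidableEq I] (A : WeakBasedRing I)
    (L : Type) [Fintype L] [DecidableEq L] where
  f : L → I → L → ℕ
  unit : ∀ l m, (∑ i, A.a i * f l i m) = if l = m then 1 else 0
  assoc : ∀ l i j m, (∑ x, f l i x * f x j m) = (∑ x, A.c i j x * f l x m)

/-- A `ℤ₊`-module is irreducible if no proper nonempty subset of its basis spans an
`A`-submodule. -/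
def ZPlusModule.Irreducible {I : Type} [Fintype I] [DecidableEq I] {A : WeakBasedRing I}
    {L : Type} [Fintype L] [DecidableEq L] (M : ZPlusModule A L) : Prop :=
  ∀ S : Finset L, S.Nonempty → (∀ l ∈ S, ∀ i x, M.f l i x ≠ 0 → x ∈ S) → S = univ

section Aux

variable {I : Type} [Fintype I] [DecidableEq I] {A : WeakBasedRing I}
variable {L : Type} [Fintype L] [DecidableEq L]

/-- The matrix of the action of `b = ∑ b_i`. -/
abbrev Bmat (M : ZPlusModule A L) (l m : L) : ℕ := ∑ i, M.f l i m

lemma Bmat_sq (M : ZPlusModule A L) (l m : L) :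
    ∑ k, Bmat M l k * Bmat M k m = ∑ t, (∑ i1, ∑ i2, A.c i1 i2 t) * M.f l t m := by
  calc ∑ k, (∑ i, M.f l i k) * ∑ j, M.f k j m
      = ∑ k, ∑ i, ∑ j, M.f l i k * M.f k j m := by
        simp_rw [Finset.sum_mul_sum]
    _ = ∑ i, ∑ j, ∑ k, M.f l i k * M.f k j m := by
        rw [Finset.sum_comm]
        exact Finset.sum_congr rfl fun i _ => Finset.sum_comm
    _ = ∑ i, ∑ j, ∑ t, A.c i j t * M.f l t m :=
        Finset.sum_congr rfl fun i _ => Finset.sum_congr rfl fun j _ => M.assoc l i j m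
    _ = ∑ i, ∑ t, ∑ j, A.c i j t * M.f l t m :=
        Finset.sum_congr rfl fun i _ => Finset.sum_comm
    _ = ∑ t, ∑ i, ∑ j, A.c i j t * M.f l t m := Finset.sum_comm
    _ = ∑ t, (∑ i1, ∑ i2, A.c i1 i2 t) * M.f l t m := by
        simp_rw [Finset.sum_mul]

lemma refl_step (M : ZPlusModule A L) (l : L) : ∃ i, M.f l i l ≠ 0 := by
  by_contra h
  push_neg at h
  have hu := M.unit l l
  simp [h] at hu

lemma trans_step (M : ZPlusModule A L) {l x m : L} {i j : I}
    (h1 : M.f l i x ≠ 0) (h2 : M.f x j m ≠ 0) : ∃ y, M.f l y m ≠ 0 := by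
  by_contra h
  push_neg at h
  have ha := M.assoc l i j m
  have hz : ∑ x : I, A.c i j x * M.f l x m = 0 :=
    Finset.sum_eq_zero fun y _ => by rw [h y, mul_zero]
  rw [hz, Finset.sum_eq_zero_iff] at ha
  exact Nat.mul_ne_zero h1 h2 (ha x (Finset.mem_univ x))

lemma one_le_Bmat (M : ZPlusModule A L) (hM : M.Irreducible) (l m : L) :
    1 ≤ Bmat M l m := by
  classical
  set S : Finset L := Finset.univ.filter fun x => ∃ i, M.f l i x ≠ 0 with hS
  have hmemS : ∀ x, x ∈ S ↔ ∃ i, M.f l i x ≠ 0 := by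
    intro x; simp [hS]
  have hne : S.Nonempty := ⟨l, (hmemS l).2 (refl_step M l)⟩
  have hclosed : ∀ x ∈ S, ∀ j y, M.f x j y ≠ 0 → y ∈ S := by
    intro x hx j y hy
    obtain ⟨i, hi⟩ := (hmemS x).1 hx
    exact (hmemS y).2 (trans_step M hi hy)
  have := hM S hne hclosed
  obtain ⟨i, hi⟩ := (hmemS m).1 (this ▸ Finset.mem_univ m)
  calc 1 ≤ M.f l i m := Nat.one_le_iff_ne_zero.2 hi
    _ ≤ Bmat M l m := Finset.single_le_sum (f := fun i => M.f l i m)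
        (fun _ _ => Nat.zero_le _) (Finset.mem_univ i)

lemma Bmat_sq_le (M : ZPlusModule A L) (l m : L) :
    ∑ k, Bmat M l k * Bmat M k m ≤
      (Finset.univ.sup fun t => ∑ i1, ∑ i2, A.c i1 i2 t) * Bmat M l m := by
  rw [Bmat_sq]
  calc ∑ t, (∑ i1, ∑ i2, A.c i1 i2 t) * M.f l t m
      ≤ ∑ t, (Finset.univ.sup fun t => ∑ i1, ∑ i2, A.c i1 i2 t) * M.f l t m :=
        Finset.sum_le_sum fun t _ =>
          Nat.mul_le_mul_right _ (Finset.le_sup (f := fun t => ∑ i1, ∑ i2, A.c i1 i2 t) (Finset.mem_univ t))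
    _ = (Finset.univ.sup fun t => ∑ i1, ∑ i2, A.c i1 i2 t) * Bmat M l m := by
        rw [← Finset.mul_sum]

lemma Bmat_diag_le (M : ZPlusModule A L) (hM : M.Irreducible) (m : L) :
    Bmat M m m ≤ Finset.univ.sup fun t => ∑ i1, ∑ i2, A.c i1 i2 t := by
  have h1 : Bmat M m m * Bmat M m m ≤ ∑ k, Bmat M m k * Bmat M k m :=
    Finset.single_le_sum (f := fun k => Bmat M m k * Bmat M k m)
      (fun _ _ => Nat.zero_le _) (Finset.mem_univ m)
  have h2 := Bmat_sq_le M m m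
  have hpos : 0 < Bmat M m m := one_le_Bmat M hM m m
  exact Nat.le_of_mul_le_mul_right (le_trans h1 h2) hpos

lemma Bmat_entry_le (M : ZPlusModule A L) (hM : M.Irreducible) (l k : L) :
    Bmat M l k ≤ (Finset.univ.sup fun t => ∑ i1, ∑ i2, A.c i1 i2 t) *
      (Finset.univ.sup fun t => ∑ i1, ∑ i2, A.c i1 i2 t) := by
  set N := Finset.univ.sup fun t => ∑ i1, ∑ i2, A.c i1 i2 t with hN
  calc Bmat M l k = Bmat M l k * 1 := (mul_one _).symm
    _ ≤ Bmat M l k * Bmat M k l := Nat.mul_le_mul_left _ (one_le_Bmat M hM k l)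
    _ ≤ ∑ k', Bmat M l k' * Bmat M k' l :=
        Finset.single_le_sum (f := fun k' => Bmat M l k' * Bmat M k' l)
          (fun _ _ => Nat.zero_le _) (Finset.mem_univ k)
    _ ≤ N * Bmat M l l := Bmat_sq_le M l l
    _ ≤ N * N := Nat.mul_le_mul_left _ (Bmat_diag_le M hM l)

lemma f_entry_le (M : ZPlusModule A L) (hM : M.Irreducible) (l : L) (i : I) (m : L) :
    M.f l i m ≤ (Finset.univ.sup fun t => ∑ i1, ∑ i2, A.c i1 i2 t) *
      (Finset.univ.sup fun t => ∑ i1, ∑ i2, A.c i1 i2 t) :=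
  le_trans (Finset.single_le_sum (f := fun i => M.f l i m)
    (fun _ _ => Nat.zero_le _) (Finset.mem_univ i)) (Bmat_entry_le M hM l m)

lemma card_le_N (M : ZPlusModule A L) (hM : M.Irreducible) :
    Fintype.card L ≤ Finset.univ.sup fun t => ∑ i1, ∑ i2, A.c i1 i2 t := by
  set N := Finset.univ.sup fun t => ∑ i1, ∑ i2, A.c i1 i2 t with hN
  rcases isEmpty_or_nonempty L with hL | hL
  · simp [Fintype.card_eq_zero]
  · classical
    set r : L → ℕ := fun l => ∑ m, Bmat M l m with hr
    obtain ⟨l0, -, hmin⟩ := Finset.exists_min_image Finset.univ r ⟨hL.some, Finset.mem_univ _⟩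
    have hcard : ∀ l, Fintype.card L ≤ r l := by
      intro l
      calc Fintype.card L = ∑ _m : L, 1 := by simp
        _ ≤ ∑ m, Bmat M l m := Finset.sum_le_sum fun m _ => one_le_Bmat M hM l m
    have hrl0pos : 0 < r l0 := lt_of_lt_of_le Fintype.card_pos (hcard l0)
    have key : r l0 * r l0 ≤ N * r l0 := by
      calc r l0 * r l0 = ∑ k, Bmat M l0 k * r l0 := by rw [← Finset.sum_mul]
        _ ≤ ∑ k, Bmat M l0 k * r k :=
            Finset.sum_le_sum fun k _ =>
              Nat.mul_le_mul_left _ (hmin k (Finset.mem_univ k))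
        _ = ∑ k, ∑ m, Bmat M l0 k * Bmat M k m := by
            simp_rw [hr, Finset.mul_sum]
        _ = ∑ m, ∑ k, Bmat M l0 k * Bmat M k m := Finset.sum_comm
        _ ≤ ∑ m, N * Bmat M l0 m := Finset.sum_le_sum fun m _ => Bmat_sq_le M l0 m
        _ = N * r l0 := by rw [hr, Finset.mul_sum]
    exact le_trans (hcard l0) (Nat.le_of_mul_le_mul_right key hrl0pos)

/-- Transport a module structure along a bijection of the basis. -/
def ZPlusModule.transport (M : ZPlusModule A L) {rk : ℕ} (e : L ≃ Fin rk) :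
    ZPlusModule A (Fin rk) where
  f x i y := M.f (e.symm x) i (e.symm y)
  unit l m := by
    rw [M.unit]; simp
  assoc l i j m := by
    rw [Fintype.sum_equiv e.symm
      (fun x => M.f (e.symm l) i (e.symm x) * M.f (e.symm x) j (e.symm m))
      (fun x => M.f (e.symm l) i x * M.f x j (e.symm m)) (fun x => rfl)]
    exact M.assoc (e.symm l) i j (e.symm m)

lemma zplus_ext {M₁ M₂ : ZPlusModule A L} (h : M₁.f = M₂.f) : M₁ = M₂ := by
  cases M₁; cases M₂; cases h; rfl

lemma finitely_many (A : WeakBasedRing I) :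
    ∃ (n : ℕ) (reps : Fin n → Σ r : ℕ, ZPlusModule A (Fin r)),
      ∀ p : Σ r : ℕ, ZPlusModule A (Fin r),
        p.1 ≤ (Finset.univ.sup fun t => ∑ i1, ∑ i2, A.c i1 i2 t) →
        (∀ l i m, p.2.f l i m ≤ (Finset.univ.sup fun t => ∑ i1, ∑ i2, A.c i1 i2 t) *
          (Finset.univ.sup fun t => ∑ i1, ∑ i2, A.c i1 i2 t)) →
        ∃ t, reps t = p := by
  classical
  set N := Finset.univ.sup fun t => ∑ i1, ∑ i2, A.c i1 i2 t with hN
  set T := {p : Σ r : ℕ, ZPlusModule A (Fin r) //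
    p.1 ≤ N ∧ ∀ l i m, p.2.f l i m ≤ N * N} with hT
  have hfin : Finite T := by
    have : Function.Injective (fun p : T =>
        (⟨⟨p.1.1, Nat.lt_succ_of_le p.2.1⟩,
          fun l i m => ⟨p.1.2.f l i m, Nat.lt_succ_of_le (p.2.2 l i m)⟩⟩ :
          Σ r : Fin (N + 1), Fin r → I → Fin r → Fin (N * N + 1))) := by
      rintro ⟨⟨r₁, M₁⟩, h₁⟩ ⟨⟨r₂, M₂⟩, h₂⟩ heq
      simp only [Sigma.mk.inj_iff, Fin.mk.injEq] at heq
      obtain ⟨hr, hf⟩ := heq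
      subst hr
      have hM : M₁ = M₂ := by
        apply zplus_ext
        funext l i m
        exact congrArg Fin.val (congrFun (congrFun (congrFun (eq_of_heq hf) l) i) m)
      subst hM
      rfl
    exact Finite.of_injective _ this
  have : Fintype T := Fintype.ofFinite T
  refine ⟨Fintype.card T, fun t => ((Fintype.equivFin T).symm t).1, ?_⟩
  intro p h1 h2
  exact ⟨Fintype.equivFin T ⟨p, ⟨h1, h2⟩⟩, by simp⟩

end Aux

/-- Every irreducible `ℤ₊`-module over a weak based ring `A` of finite rank has rank bounded
by `N`, the maximum coefficient in the expansion of `b²` (where `b` is the sum of all basis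
elements of `A`), and there are only finitely many equivalence classes of irreducible
`ℤ₊`-modules over `A`. -/
theorem stmt_1 {I : Type} [Fintype I] [DecidableEq I] (A : WeakBasedRing I) :
    (∀ (L : Type) [Fintype L] [DecidableEq L] (M : ZPlusModule A L), M.Irreducible →
      Fintype.card L ≤ univ.sup fun l => ∑ i1, ∑ i2, A.c i1 i2 l) ∧
    ∃ (n : ℕ) (reps : Fin n → Σ r : ℕ, ZPlusModule A (Fin r)),
      ∀ (L : Type) [Fintype L] [DecidableEq L] (M : ZPlusModule A L), M.Irreducible →
        ∃ (t : Fin n) (e : L ≃ Fin (reps t).1),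
          ∀ l i m, (reps t).2.f (e l) i (e m) = M.f l i m := by
  classical
  set N := Finset.univ.sup fun t => ∑ i1, ∑ i2, A.c i1 i2 t with hN
  refine ⟨fun L _ _ M hM => card_le_N M hM, ?_⟩
  obtain ⟨n, reps, hreps⟩ := finitely_many A
  refine ⟨n, reps, ?_⟩
  intro L _ _ M hM
  set e0 := Fintype.equivFin L with he0
  set p : Σ r : ℕ, ZPlusModule A (Fin r) := ⟨Fintype.card L, M.transport e0⟩ with hp
  obtain ⟨t, ht⟩ := hreps p (card_le_N M hM)
    (fun l i m => f_entry_le M hM (e0.symm l) i (e0.symm m))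
  refine ⟨t, ?_⟩
  rw [ht]
  exact ⟨e0, fun l i m => by
    show (M.transport e0).f (e0 l) i (e0 m) = M.f l i m
    simp [ZPlusModule.transport]⟩
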